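/- Let ν > 0, T > 0, N ∈ ℕ. Then ∑_{k=N+1}^∞ (1 - exp(-2 ν π² k² T)) / (2 ν π² k²) ≥ (1 - exp(-2 ν π² T)) / (4 ν π² N). -/

import Mathlib

open Real Filter

lemma telescope_hasSum (a : ℝ) (ha : 0 < a) :
    HasSum (fun k : ℕ => 1/((k:ℝ)+a) - 1/((k:ℝ)+a+1)) (1/a) := by
  have hnn : ∀ k : ℕ, 0 ≤ 1/((k:ℝ)+a) - 1/((k:ℝ)+a+1) := by
    intro k
    have h1 : 0 < (k:ℝ)+a := by positivity
    have : 1/((k:ℝ)+a+1) ≤ 1/((k:ℝ)+a) := by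
      apply one_div_le_one_div_of_le h1; linarith
    linarith
  rw [hasSum_iff_tendsto_nat_of_nonneg hnn]
  have hsum : ∀ n : ℕ, ∑ i ∈ Finset.range n, (1/((i:ℝ)+a) - 1/((i:ℝ)+a+1))
      = 1/a - 1/((n:ℝ)+a) := by
    intro n
    have := Finset.sum_range_sub' (f := fun i : ℕ => 1/((i:ℝ)+a)) n
    simp only [Nat.cast_zero, zero_add] at this
    rw [← this]
    apply Finset.sum_congr rfl
    intro i _
    push_cast
    ring_nf
  simp only [hsum]
  have h0 : Tendsto (fun n : ℕ => 1/((n:ℝ)+a)) atTop (nhds 0) := by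
    simp only [one_div]
    apply Tendsto.comp tendsto_inv_atTop_zero
    exact tendsto_atTop_add_const_right _ a tendsto_natCast_atTop_atTop
  have := (tendsto_const_nhds (x := 1/a) (f := atTop)).sub h0
  simpa using this

open Real in
theorem stmt_10 (ν T : ℝ) (hν : 0 < ν) (hT : 0 < T) (N : ℕ) :
    ∑' k : ℕ,
        (1 - Real.exp (-(2 * ν * π ^ 2 * ((k : ℝ) + N + 1) ^ 2 * T))) /
          (2 * ν * π ^ 2 * ((k : ℝ) + N + 1) ^ 2) ≥
      (1 - Real.exp (-(2 * ν * π ^ 2 * T))) / (4 * ν * π ^ 2 * N) := by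
  have hπ := Real.pi_pos
  set c : ℝ := 1 - Real.exp (-(2 * ν * π ^ 2 * T)) with hc
  have hcpos : 0 < c := by
    have h1 : 0 < 2 * ν * π ^ 2 * T := by positivity
    have : Real.exp (-(2 * ν * π ^ 2 * T)) < 1 := by
      apply Real.exp_lt_one_iff.mpr; linarith
    simp only [hc]; linarith
  set f : ℕ → ℝ := fun k =>
    (1 - Real.exp (-(2 * ν * π ^ 2 * ((k : ℝ) + N + 1) ^ 2 * T))) /
      (2 * ν * π ^ 2 * ((k : ℝ) + N + 1) ^ 2) with hf
  have hden : ∀ k : ℕ, 0 < 2 * ν * π ^ 2 * ((k : ℝ) + N + 1) ^ 2 := by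
    intro k; positivity
  have hx1 : ∀ k : ℕ, (1:ℝ) ≤ (k:ℝ) + N + 1 := by
    intro k
    have h1 : (0:ℝ) ≤ (k:ℝ) := Nat.cast_nonneg k
    have h2 : (0:ℝ) ≤ (N:ℝ) := Nat.cast_nonneg N
    linarith
  have hexple1 : ∀ k : ℕ,
      Real.exp (-(2 * ν * π ^ 2 * ((k : ℝ) + N + 1) ^ 2 * T)) ≤ 1 := by
    intro k
    apply Real.exp_le_one_iff.mpr
    have h1 : 0 < 2 * ν * π ^ 2 * ((k : ℝ) + N + 1) ^ 2 * T := by positivity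
    linarith
  have hfnn : ∀ k, 0 ≤ f k := by
    intro k
    apply div_nonneg _ (hden k).le
    linarith [hexple1 k]
  rcases Nat.eq_zero_or_pos N with hN | hN
  · subst hN
    simp only [Nat.cast_zero, mul_zero, div_zero]
    exact tsum_nonneg hfnn
  set g : ℕ → ℝ := fun k =>
    (c / (2 * ν * π ^ 2)) * (1/((k:ℝ)+((N:ℝ)+1)) - 1/((k:ℝ)+((N:ℝ)+1)+1)) with hg
  have hgf : ∀ k, g k ≤ f k := by
    intro k
    have hd := hden k
    have hx := hx1 k
    have hnum : c ≤ 1 - Real.exp (-(2 * ν * π ^ 2 * ((k : ℝ) + N + 1) ^ 2 * T)) := by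
      have h2 : 0 < 2 * ν * π ^ 2 * T := by positivity
      have hmono : Real.exp (-(2 * ν * π ^ 2 * ((k : ℝ) + N + 1) ^ 2 * T)) ≤
          Real.exp (-(2 * ν * π ^ 2 * T)) := by
        apply Real.exp_le_exp.mpr
        nlinarith [mul_nonneg (by nlinarith : (0:ℝ) ≤ ((k:ℝ)+N+1)^2 - 1) h2.le]
      simp only [hc]; linarith
    have step1 : c / (2 * ν * π ^ 2 * ((k : ℝ) + N + 1) ^ 2) ≤ f k := by
      simp only [hf]
      gcongr
    have step2 : g k ≤ c / (2 * ν * π ^ 2 * ((k : ℝ) + N + 1) ^ 2) := by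
      have hkN : (0:ℝ) < (k:ℝ) + ((N:ℝ)+1) := by positivity
      have htel : 1/((k:ℝ)+((N:ℝ)+1)) - 1/((k:ℝ)+((N:ℝ)+1)+1)
          = 1/(((k:ℝ)+((N:ℝ)+1)) * (((k:ℝ)+((N:ℝ)+1))+1)) := by
        field_simp
        ring
      simp only [hg]
      rw [htel, div_mul_div_comm, mul_one]
      gcongr
      nlinarith
    exact step2.trans step1
  have hgsum : HasSum g ((c / (2 * ν * π ^ 2)) * (1/((N:ℝ)+1))) := by
    have := telescope_hasSum ((N:ℝ)+1) (by positivity)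
    exact this.mul_left _
  have hbsum : Summable (fun k : ℕ => 1 / (2 * ν * π ^ 2) * (1/((k:ℝ)+N+1)^2)) := by
    apply Summable.mul_left
    have h2 : Summable (fun n : ℕ => 1 / (n:ℝ) ^ 2) :=
      Real.summable_one_div_nat_pow.mpr (by norm_num)
    have h3 := (summable_nat_add_iff (N+1)).mpr h2
    apply h3.congr
    intro k
    push_cast
    ring_nf
  have hfsum : Summable f := by
    apply Summable.of_nonneg_of_le hfnn _ hbsum
    intro k
    have hd := hden k
    calc f k ≤ 1 / (2 * ν * π ^ 2 * ((k : ℝ) + N + 1) ^ 2) := by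
          simp only [hf]
          gcongr
          linarith [Real.exp_pos (-(2 * ν * π ^ 2 * ((k : ℝ) + N + 1) ^ 2 * T))]
      _ = 1 / (2 * ν * π ^ 2) * (1/((k:ℝ)+N+1)^2) := by
          rw [one_div_mul_one_div]
  have hle : tsum g ≤ tsum f := Summable.tsum_le_tsum hgf hgsum.summable hfsum
  rw [hgsum.tsum_eq] at hle
  have hN1 : (1:ℝ) ≤ (N:ℝ) := by exact_mod_cast hN
  have hfinal : (1 - Real.exp (-(2 * ν * π ^ 2 * T))) / (4 * ν * π ^ 2 * N) ≤
      (c / (2 * ν * π ^ 2)) * (1/((N:ℝ)+1)) := by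
    rw [← hc, mul_one_div, div_div]
    apply div_le_div_of_nonneg_left hcpos.le (by positivity)
    have hp : (0:ℝ) < ν * π ^ 2 := by positivity
    nlinarith [mul_le_mul_of_nonneg_right (by linarith : (N:ℝ)+1 ≤ 2*N) hp.le]
  exact le_trans hfinal hle
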